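/- arXiv:1606.03959 — 2 statements merged into one kernel-verified Lean document; each statement's English description precedes it below -/
import Mathlib

section
/- For s ∈ Δ, let μ_s be the law on Mat(ℕ×m, ℝ) of G·diag(s₁,…,s_m)·O, where G has i.i.d. standard real Gaussian entries and O is an independent Haar-random matrix in O(m). Then for μ_s-almost every X, and every k ∈ ℕ, lim_{n→∞} tr([(1/n)·C_n(X)ᵀ C_n(X)]^k) = ∑_{i=1}^m s_i^{2k}. -/
open MeasureTheory ProbabilityTheory Filter Finset Matrix

/-- Matrices over a measurable space carry the product measurable structure. -/
noncomputable instance matrixMeasurableSpace {l n α : Type*} [MeasurableSpace α] :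
    MeasurableSpace (Matrix l n α) :=
  show MeasurableSpace (l → n → α) from inferInstance


open Real

lemma gauss_pdf_eq (x : ℝ) :
    gaussianPDFReal 0 1 x = (Real.sqrt (2 * π))⁻¹ * Real.exp (-(2:ℝ)⁻¹ * x ^ 2) := by
  simp only [gaussianPDFReal, NNReal.coe_one, mul_one, sub_zero]
  ring_nf

lemma integrable_exp_half : Integrable (fun x : ℝ => Real.exp (-(2:ℝ)⁻¹ * x ^ 2)) := by
  exact integrable_exp_neg_mul_sq (by norm_num)

lemma integrable_mul_exp_half : Integrable (fun x : ℝ => x * Real.exp (-(2:ℝ)⁻¹ * x ^ 2)) := by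
  exact integrable_mul_exp_neg_mul_sq (by norm_num)

lemma integrable_sq_exp_half : Integrable (fun x : ℝ => x ^ 2 * Real.exp (-(2:ℝ)⁻¹ * x ^ 2)) := by
  have := integrable_rpow_mul_exp_neg_mul_sq (b := (2:ℝ)⁻¹) (by norm_num)
    (s := ((2:ℕ):ℝ)) (by norm_num)
  simpa [Real.rpow_natCast] using this

lemma integral_exp_half : ∫ x : ℝ, Real.exp (-(2:ℝ)⁻¹ * x ^ 2) = Real.sqrt (2 * π) := by
  rw [integral_gaussian]
  rw [show π / (2:ℝ)⁻¹ = 2 * π by ring]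

lemma integral_mul_exp_half : ∫ x : ℝ, x * Real.exp (-(2:ℝ)⁻¹ * x ^ 2) = 0 := by
  have h := integral_neg_eq_self (fun x : ℝ => x * Real.exp (-(2:ℝ)⁻¹ * x ^ 2)) volume
  simp only [neg_mul, neg_sq, neg_neg] at h
  have h2 : ∫ x : ℝ, -(x * Real.exp (-(2:ℝ)⁻¹ * x ^ 2)) =
      ∫ x : ℝ, x * Real.exp (-(2:ℝ)⁻¹ * x ^ 2) := by
    simpa using h
  rw [integral_neg] at h2
  linarith

lemma integral_sq_exp_half : ∫ x : ℝ, x ^ 2 * Real.exp (-(2:ℝ)⁻¹ * x ^ 2) = Real.sqrt (2 * π) := by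
  have habs : (fun x : ℝ => x ^ 2 * Real.exp (-(2:ℝ)⁻¹ * x ^ 2)) =
      fun x : ℝ => |x| ^ 2 * Real.exp (-(2:ℝ)⁻¹ * |x| ^ 2) := by
    funext x; rw [sq_abs]
  -- integral over Ioi 0 of the derivative expression
  have hderiv : ∀ x ∈ Set.Ici (0:ℝ), HasDerivAt (fun y : ℝ => -y * Real.exp (-(2:ℝ)⁻¹ * y ^ 2))
      (x ^ 2 * Real.exp (-(2:ℝ)⁻¹ * x ^ 2) - Real.exp (-(2:ℝ)⁻¹ * x ^ 2)) x := by
    intro x _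
    have h1 : HasDerivAt (fun y : ℝ => -(2:ℝ)⁻¹ * y ^ 2) (-(2:ℝ)⁻¹ * (2 * x ^ 1)) x :=
      (hasDerivAt_pow 2 x).const_mul _
    have h2 := h1.exp
    have h3 : HasDerivAt (fun y : ℝ => -y * Real.exp (-(2:ℝ)⁻¹ * y ^ 2)) _ x :=
      ((hasDerivAt_id x).neg).mul h2
    convert h3 using 1
    simp [mul_comm]
    ring
  have hint : IntegrableOn (fun x : ℝ =>
      x ^ 2 * Real.exp (-(2:ℝ)⁻¹ * x ^ 2) - Real.exp (-(2:ℝ)⁻¹ * x ^ 2)) (Set.Ioi 0) :=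
    (integrable_sq_exp_half.sub integrable_exp_half).integrableOn
  have htend : Tendsto (fun y : ℝ => -y * Real.exp (-(2:ℝ)⁻¹ * y ^ 2)) atTop (nhds 0) := by
    have ho := rpow_mul_exp_neg_mul_sq_isLittleO_exp_neg (b := (2:ℝ)⁻¹) (by norm_num) 1
    have hlin : Tendsto (fun x : ℝ => (1/2 : ℝ) * x) atTop atTop :=
      Tendsto.const_mul_atTop (by norm_num) tendsto_id
    have hexp : Tendsto (fun x : ℝ => rexp (-(1/2 : ℝ) * x)) atTop (nhds 0) := by
      have h2 := tendsto_exp_neg_atTop_nhds_zero.comp hlin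
      refine h2.congr fun x => ?_
      simp [Function.comp, neg_mul]
    have := ho.isBigO.trans_tendsto hexp
    simp only [Real.rpow_one] at this
    have := this.neg
    simpa [neg_mul] using this
  have key := integral_Ioi_of_hasDerivAt_of_tendsto' hderiv hint htend
  simp only [neg_zero, zero_mul, sub_zero] at key
  -- key : ∫ x in Ioi 0, (x^2 * e - e) = 0 - (-0 * e) = 0
  have key2 : (∫ x in Set.Ioi (0:ℝ), x ^ 2 * Real.exp (-(2:ℝ)⁻¹ * x ^ 2)) =
      ∫ x in Set.Ioi (0:ℝ), Real.exp (-(2:ℝ)⁻¹ * x ^ 2) := by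
    rw [integral_sub (integrable_sq_exp_half.integrableOn (s := Set.Ioi 0))
      (integrable_exp_half.integrableOn (s := Set.Ioi 0))] at key
    linarith
  calc ∫ x : ℝ, x ^ 2 * Real.exp (-(2:ℝ)⁻¹ * x ^ 2)
      = ∫ x : ℝ, |x| ^ 2 * Real.exp (-(2:ℝ)⁻¹ * |x| ^ 2) := by rw [← habs]
    _ = 2 * ∫ x in Set.Ioi (0:ℝ), x ^ 2 * Real.exp (-(2:ℝ)⁻¹ * x ^ 2) :=
        integral_comp_abs (f := fun x : ℝ => x ^ 2 * Real.exp (-(2:ℝ)⁻¹ * x ^ 2))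
    _ = 2 * ∫ x in Set.Ioi (0:ℝ), Real.exp (-(2:ℝ)⁻¹ * x ^ 2) := by rw [key2]
    _ = Real.sqrt (2 * π) := by
        rw [integral_gaussian_Ioi, show π / (2:ℝ)⁻¹ = 2 * π by ring]
        ring

lemma gaussian_eq_withDensity :
    gaussianReal 0 1 = MeasureTheory.volume.withDensity
      (fun x => ((Real.toNNReal (gaussianPDFReal 0 1 x) : NNReal) : ENNReal)) := by
  rw [gaussianReal_of_var_ne_zero 0 one_ne_zero]
  rfl

lemma integral_gaussianReal_eq (g : ℝ → ℝ) :
    ∫ x, g x ∂(gaussianReal 0 1) = ∫ x, gaussianPDFReal 0 1 x * g x := by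
  rw [gaussian_eq_withDensity,
    integral_withDensity_eq_integral_smul ((measurable_gaussianPDFReal 0 1).real_toNNReal)]
  congr 1
  funext x
  simp [NNReal.smul_def, Real.coe_toNNReal _ (gaussianPDFReal_nonneg 0 1 x)]

lemma integrable_gaussianReal_iff (g : ℝ → ℝ) :
    Integrable g (gaussianReal 0 1) ↔
      Integrable (fun x => gaussianPDFReal 0 1 x * g x) MeasureTheory.volume := by
  rw [gaussian_eq_withDensity]
  have hiff := integrable_withDensity_iff_integrable_smul
    (μ := MeasureTheory.volume) ((measurable_gaussianPDFReal 0 1).real_toNNReal) (g := g)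
  rw [hiff]
  constructor <;> intro h <;> refine h.congr (Filter.Eventually.of_forall fun x => ?_) <;>
    simp [NNReal.smul_def, Real.coe_toNNReal _ (gaussianPDFReal_nonneg 0 1 x)]

lemma sqrt_two_pi_pos : 0 < Real.sqrt (2 * π) := by
  have : (0:ℝ) < 2 * π := by positivity
  exact Real.sqrt_pos.mpr this

lemma integrable_id_gaussian : Integrable (fun x : ℝ => x) (gaussianReal 0 1) := by
  rw [integrable_gaussianReal_iff]
  have : (fun x : ℝ => gaussianPDFReal 0 1 x * x) =
      fun x => (Real.sqrt (2 * π))⁻¹ * (x * Real.exp (-(2:ℝ)⁻¹ * x ^ 2)) := by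
    funext x; rw [gauss_pdf_eq]; ring
  rw [this]
  exact integrable_mul_exp_half.const_mul _

lemma integral_id_gaussian : ∫ x, x ∂(gaussianReal 0 1) = 0 := by
  rw [integral_gaussianReal_eq]
  have : (fun x : ℝ => gaussianPDFReal 0 1 x * x) =
      fun x => (Real.sqrt (2 * π))⁻¹ * (x * Real.exp (-(2:ℝ)⁻¹ * x ^ 2)) := by
    funext x; rw [gauss_pdf_eq]; ring
  rw [this, integral_const_mul, integral_mul_exp_half, mul_zero]

lemma integrable_sq_gaussian : Integrable (fun x : ℝ => x * x) (gaussianReal 0 1) := by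
  rw [integrable_gaussianReal_iff]
  have : (fun x : ℝ => gaussianPDFReal 0 1 x * (x * x)) =
      fun x => (Real.sqrt (2 * π))⁻¹ * (x ^ 2 * Real.exp (-(2:ℝ)⁻¹ * x ^ 2)) := by
    funext x; rw [gauss_pdf_eq]; ring
  rw [this]
  exact integrable_sq_exp_half.const_mul _

lemma integral_sq_gaussian : ∫ x, x * x ∂(gaussianReal 0 1) = 1 := by
  rw [integral_gaussianReal_eq]
  have : (fun x : ℝ => gaussianPDFReal 0 1 x * (x * x)) =
      fun x => (Real.sqrt (2 * π))⁻¹ * (x ^ 2 * Real.exp (-(2:ℝ)⁻¹ * x ^ 2)) := by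
    funext x; rw [gauss_pdf_eq]; ring
  rw [this, integral_const_mul, integral_sq_exp_half]
  exact inv_mul_cancel₀ (ne_of_gt sqrt_two_pi_pos)

section RV

variable {Ω : Type*} [MeasurableSpace Ω] {P : Measure Ω}

lemma aemeasurable_of_gaussian {X : Ω → ℝ} (hX : Measure.map X P = gaussianReal 0 1) :
    AEMeasurable X P := by
  by_contra h
  rw [Measure.map_of_not_aemeasurable h] at hX
  have h0 : (gaussianReal 0 1 : Measure ℝ) Set.univ = 0 := by rw [← hX]; simp
  simp [measure_univ] at h0

lemma integrable_of_gaussian {X : Ω → ℝ} (hX : Measure.map X P = gaussianReal 0 1) :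
    Integrable X P := by
  have hae := aemeasurable_of_gaussian hX
  refine (integrable_map_measure (f := X) (g := fun x : ℝ => x) ?_ hae).mp ?_
  · rw [hX]; exact aestronglyMeasurable_id
  · rw [hX]; exact integrable_id_gaussian

lemma integral_of_gaussian {X : Ω → ℝ} (hX : Measure.map X P = gaussianReal 0 1) :
    ∫ ω, X ω ∂P = 0 := by
  have hae := aemeasurable_of_gaussian hX
  have h := integral_map (f := fun x : ℝ => x) hae (by rw [hX]; exact aestronglyMeasurable_id)
  rw [hX, integral_id_gaussian] at h
  exact h.symm

lemma integrable_sq_of_gaussian {X : Ω → ℝ} (hX : Measure.map X P = gaussianReal 0 1) :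
    Integrable (fun ω => X ω * X ω) P := by
  have hae := aemeasurable_of_gaussian hX
  refine (integrable_map_measure (f := X) (g := fun x : ℝ => x * x) ?_ hae).mp ?_
  · rw [hX]; exact (continuous_id.mul continuous_id).aestronglyMeasurable
  · rw [hX]; exact integrable_sq_gaussian

lemma integral_sq_of_gaussian {X : Ω → ℝ} (hX : Measure.map X P = gaussianReal 0 1) :
    ∫ ω, X ω * X ω ∂P = 1 := by
  have hae := aemeasurable_of_gaussian hX
  have h := integral_map (f := fun x : ℝ => x * x) hae
    (by rw [hX]; exact (continuous_id.mul continuous_id).aestronglyMeasurable)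
  rw [hX, integral_sq_gaussian] at h
  exact h.symm

lemma iIndepFun_congr_ae {ι : Type*} {β : ι → Type*} {mβ : ∀ i, MeasurableSpace (β i)}
    {f f' : ∀ i, Ω → β i} (hf : iIndepFun (m := mβ) f P) (h : ∀ i, f i =ᵐ[P] f' i) :
    iIndepFun (m := mβ) f' P := by
  rw [iIndepFun_iff_measure_inter_preimage_eq_mul] at hf ⊢
  intro S sets hmeas
  have hall : ∀ᵐ ω ∂P, ∀ i ∈ (S : Set ι), f i ω = f' i ω :=
    (MeasureTheory.ae_ball_iff S.countable_toSet).2 fun i _ => h i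
  have hset : ∀ i ∈ S, P (f' i ⁻¹' sets i) = P (f i ⁻¹' sets i) := by
    intro i hi
    refine measure_congr ?_
    filter_upwards [h i] with ω hω
    show (f' i ω ∈ sets i) = (f i ω ∈ sets i)
    rw [hω]
  have hinter : P (⋂ i ∈ S, f' i ⁻¹' sets i) = P (⋂ i ∈ S, f i ⁻¹' sets i) := by
    refine measure_congr ?_
    filter_upwards [hall] with ω hω
    show (ω ∈ ⋂ i ∈ S, f' i ⁻¹' sets i) = (ω ∈ ⋂ i ∈ S, f i ⁻¹' sets i)
    rw [eq_iff_iff]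
    simp only [Set.mem_iInter, Set.mem_preimage]
    exact forall₂_congr fun i hi => by rw [hω i hi]
  rw [hinter, hf S hmeas]
  exact Finset.prod_congr rfl fun i hi => (hset i hi).symm

end RV

section SLLN

variable {Ω : Type*} [MeasurableSpace Ω] {P : Measure Ω}

lemma slln_cross (m : ℕ) (g : ℕ → Fin m → Ω → ℝ)
    (hindep : iIndepFun (fun p : ℕ × Fin m => g p.1 p.2) P)
    (hdist : ∀ l j, Measure.map (g l j) P = gaussianReal 0 1) :
    ∀ᵐ ω ∂P, ∀ a b : Fin m,
      Tendsto (fun n : ℕ => (∑ l ∈ range n, g l a ω * g l b ω) / n) atTop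
        (nhds (if a = b then 1 else 0)) := by
  haveI : IsProbabilityMeasure P := hindep.isProbabilityMeasure
  have hGae : ∀ p : ℕ × Fin m, AEMeasurable (g p.1 p.2) P :=
    fun p => aemeasurable_of_gaussian (hdist p.1 p.2)
  set h : ℕ × Fin m → Ω → ℝ := fun p => AEMeasurable.mk _ (hGae p) with hh
  have hmeas : ∀ p, Measurable (h p) := fun p => (hGae p).measurable_mk
  have hae : ∀ p : ℕ × Fin m, g p.1 p.2 =ᵐ[P] h p := fun p => (hGae p).ae_eq_mk
  have hindep' : iIndepFun h P :=
    iIndepFun_congr_ae hindep hae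
  have hdist' : ∀ p : ℕ × Fin m, Measure.map (h p) P = gaussianReal 0 1 := by
    intro p
    rw [← Measure.map_congr (hae p)]
    exact hdist p.1 p.2
  have key : ∀ a b : Fin m, ∀ᵐ ω ∂P,
      Tendsto (fun n : ℕ => (∑ l ∈ range n, h (l, a) ω * h (l, b) ω) / n) atTop
        (nhds (if a = b then 1 else 0)) := by
    intro a b
    set Y : ℕ → Ω → ℝ := fun l ω => h (l, a) ω * h (l, b) ω with hY
    have hint : Integrable (Y 0) P := by
      by_cases hab : a = b
      · subst hab
        exact integrable_sq_of_gaussian (hdist' (0, a))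
      · exact (hindep'.indepFun (show ((0:ℕ), a) ≠ ((0:ℕ), b) by simp [hab])).integrable_mul
          (integrable_of_gaussian (hdist' _)) (integrable_of_gaussian (hdist' _))
    have hpair : Pairwise (Function.onFun (IndepFun · · P) Y) := by
      intro l l' hll'
      have h4 := hindep'.indepFun_prodMk_prodMk hmeas (l, a) (l, b) (l', a) (l', b)
        (by simp [hll']) (by simp [hll']) (by simp [hll']) (by simp [hll'])
      exact h4.comp measurable_mul measurable_mul
    have hident : ∀ l, IdentDistrib (Y l) (Y 0) P P := by
      intro l
      by_cases hab : a = b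
      · subst hab
        have h1 : IdentDistrib (h (l, a)) (h (0, a)) P P :=
          ⟨(hmeas _).aemeasurable, (hmeas _).aemeasurable, by rw [hdist', hdist']⟩
        exact h1.comp (measurable_id.mul measurable_id)
      · have hmap : ∀ l' : ℕ, Measure.map (fun ω => (h (l', a) ω, h (l', b) ω)) P =
            (gaussianReal 0 1).prod (gaussianReal 0 1) := by
          intro l'
          have hi := hindep'.indepFun (show ((l':ℕ), a) ≠ ((l':ℕ), b) by simp [hab])
          rw [(indepFun_iff_map_prod_eq_prod_map_map (hmeas _).aemeasurable
            (hmeas _).aemeasurable).mp hi, hdist', hdist']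
        have h1 : IdentDistrib (fun ω => (h (l, a) ω, h (l, b) ω))
            (fun ω => (h (0, a) ω, h (0, b) ω)) P P :=
          ⟨(hmeas _).aemeasurable.prodMk (hmeas _).aemeasurable,
            (hmeas _).aemeasurable.prodMk (hmeas _).aemeasurable, by rw [hmap, hmap]⟩
        exact h1.comp measurable_mul
    have hmean : ∫ ω, Y 0 ω ∂P = if a = b then 1 else 0 := by
      by_cases hab : a = b
      · subst hab
        simp only [if_pos rfl]
        exact integral_sq_of_gaussian (hdist' (0, a))
      · rw [if_neg hab]
        have hi := hindep'.indepFun (show ((0:ℕ), a) ≠ ((0:ℕ), b) by simp [hab])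
        show ∫ ω, (h (0, a) * h (0, b)) ω ∂P = 0
        rw [hi.integral_mul_eq_mul_integral (integrable_of_gaussian (hdist' _)).aestronglyMeasurable
          (integrable_of_gaussian (hdist' _)).aestronglyMeasurable,
          integral_of_gaussian (hdist' _), integral_of_gaussian (hdist' _), mul_zero]
    have hs := strong_law_ae_real Y hint hpair hident
    rw [hmean] at hs
    exact hs
  have hkey : ∀ᵐ ω ∂P, ∀ a b : Fin m,
      Tendsto (fun n : ℕ => (∑ l ∈ range n, h (l, a) ω * h (l, b) ω) / n) atTop
        (nhds (if a = b then 1 else 0)) := by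
    rw [ae_all_iff]
    intro a
    rw [ae_all_iff]
    intro b
    exact key a b
  have haeeq : ∀ᵐ ω ∂P, ∀ p : ℕ × Fin m, g p.1 p.2 ω = h p ω :=
    ae_all_iff.2 fun p => hae p
  filter_upwards [hkey, haeeq] with ω h1 h2 a b
  refine (h1 a b).congr fun n => ?_
  congr 1
  exact Finset.sum_congr rfl fun l _ => by rw [h2 (l, a), h2 (l, b)]

end SLLN

lemma det_trace_limit (m : ℕ) (s : Fin m → ℝ) (U : Matrix (Fin m) (Fin m) ℝ)
    (hU : U * Uᵀ = 1) (G : ℕ → Fin m → ℝ)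
    (hG : ∀ a b : Fin m, Tendsto (fun n : ℕ => (∑ l ∈ range n, G l a * G l b) / n) atTop
      (nhds (if a = b then 1 else 0)))
    (X : ℕ → Fin m → ℝ) (hX : ∀ l j, X l j = ∑ a, G l a * s a * U a j) :
    ∀ k : ℕ, 1 ≤ k →
      Tendsto (fun n : ℕ => Matrix.trace ((((n : ℝ)⁻¹) •
        ((Matrix.of (fun (l : Fin n) (j : Fin m) => X l j))ᵀ *
          Matrix.of (fun (l : Fin n) (j : Fin m) => X l j))) ^ k)) atTop
        (nhds (∑ i, s i ^ (2 * k))) := by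
  classical
  intro k hk
  set D : Matrix (Fin m) (Fin m) ℝ := Matrix.diagonal (fun a => s a ^ 2) with hD
  set M : Matrix (Fin m) (Fin m) ℝ := Uᵀ * D * U with hM
  set A : ℕ → Matrix (Fin m) (Fin m) ℝ := fun n =>
    ((n : ℝ)⁻¹) • ((Matrix.of (fun (l : Fin n) (j : Fin m) => X l j))ᵀ *
      Matrix.of (fun (l : Fin n) (j : Fin m) => X l j)) with hA
  have hentry : ∀ (n : ℕ) (i j : Fin m), A n i j =
      ∑ a, ∑ b, (s a * U a i * (s b * U b j)) * ((∑ l ∈ range n, G l a * G l b) / n) := by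
    intro n i j
    have h1 : A n i j = (n : ℝ)⁻¹ * ∑ l : Fin n, X (l : ℕ) i * X (l : ℕ) j := by
      simp [hA, Matrix.smul_apply, Matrix.mul_apply, Matrix.transpose_apply, smul_eq_mul]
    have h2 : ∀ l : Fin n, X (l : ℕ) i * X (l : ℕ) j =
        ∑ a, ∑ b, (s a * U a i * (s b * U b j)) * (G (l : ℕ) a * G (l : ℕ) b) := by
      intro l
      rw [hX, hX, Finset.sum_mul_sum]
      exact Finset.sum_congr rfl fun a _ => Finset.sum_congr rfl fun b _ => by ring
    have h3 : (∑ l : Fin n, X (l : ℕ) i * X (l : ℕ) j) =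
        ∑ a, ∑ b, (s a * U a i * (s b * U b j)) * ∑ l ∈ range n, G l a * G l b := by
      calc (∑ l : Fin n, X (l : ℕ) i * X (l : ℕ) j)
          = ∑ l : Fin n, ∑ a, ∑ b,
              (s a * U a i * (s b * U b j)) * (G (l : ℕ) a * G (l : ℕ) b) :=
            Finset.sum_congr rfl fun l _ => h2 l
        _ = ∑ a, ∑ l : Fin n, ∑ b,
              (s a * U a i * (s b * U b j)) * (G (l : ℕ) a * G (l : ℕ) b) :=
            Finset.sum_comm
        _ = ∑ a, ∑ b, ∑ l : Fin n,
              (s a * U a i * (s b * U b j)) * (G (l : ℕ) a * G (l : ℕ) b) :=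
            Finset.sum_congr rfl fun a _ => Finset.sum_comm
        _ = ∑ a, ∑ b, (s a * U a i * (s b * U b j)) * ∑ l : Fin n, G (l : ℕ) a * G (l : ℕ) b :=
            Finset.sum_congr rfl fun a _ => Finset.sum_congr rfl fun b _ =>
              (Finset.mul_sum _ _ _).symm
        _ = ∑ a, ∑ b, (s a * U a i * (s b * U b j)) * ∑ l ∈ range n, G l a * G l b := by
            refine Finset.sum_congr rfl fun a _ => Finset.sum_congr rfl fun b _ => ?_
            congr 1
            exact Fin.sum_univ_eq_sum_range (fun l => G l a * G l b) n
    rw [h1, h3, Finset.mul_sum]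
    refine Finset.sum_congr rfl fun a _ => ?_
    rw [Finset.mul_sum]
    refine Finset.sum_congr rfl fun b _ => ?_
    ring
  have hMij : ∀ i j : Fin m,
      (∑ a, ∑ b, (s a * U a i * (s b * U b j)) * (if a = b then 1 else 0)) = M i j := by
    intro i j
    have h4 : ∀ a : Fin m,
        (∑ b, (s a * U a i * (s b * U b j)) * (if a = b then 1 else 0)) =
          s a * U a i * (s a * U a j) := by
      intro a
      rw [Finset.sum_congr rfl (fun b _ => by
        rw [mul_ite, mul_one, mul_zero])]
      exact Finset.sum_ite_eq Finset.univ a (fun b => s a * U a i * (s b * U b j))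
        |>.trans (by simp)
    rw [Finset.sum_congr rfl fun a _ => h4 a]
    rw [hM, Matrix.mul_assoc, hD]
    simp only [Matrix.mul_apply, Matrix.transpose_apply, Matrix.diagonal_apply, ite_mul,
      zero_mul, Finset.sum_ite_eq, Finset.mem_univ, if_true]
    exact Finset.sum_congr rfl fun a _ => by ring
  have hAM : Tendsto A atTop (nhds M) := by
    refine tendsto_pi_nhds.2 ?_
    intro i
    rw [tendsto_pi_nhds]
    intro j
    have ht : Tendsto (fun n : ℕ => ∑ a, ∑ b : Fin m,
        (s a * U a i * (s b * U b j)) * ((∑ l ∈ range n, G l a * G l b) / n)) atTop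
        (nhds (∑ a, ∑ b : Fin m, (s a * U a i * (s b * U b j)) * (if a = b then 1 else 0))) := by
      refine tendsto_finset_sum _ fun a _ => tendsto_finset_sum _ fun b _ => ?_
      exact (hG a b).const_mul _
    rw [hMij i j] at ht
    exact ht.congr fun n => (hentry n i j).symm
  have hcont : Continuous fun B : Matrix (Fin m) (Fin m) ℝ => (B ^ k).trace :=
    (continuous_pow k).matrix_trace
  have hfinal := (hcont.tendsto M).comp hAM
  have hMk : ∀ k : ℕ, 1 ≤ k → M ^ k = Uᵀ * D ^ k * U := by
    intro k hk
    induction k with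
    | zero => omega
    | succ k ih =>
      rcases Nat.eq_zero_or_pos k with hk0 | hk1
      · subst hk0; simp [hM]
      · rw [pow_succ, ih hk1, hM, pow_succ]
        simp only [Matrix.mul_assoc]
        rw [← Matrix.mul_assoc U Uᵀ (D * U), hU, Matrix.one_mul]
  have htr : (M ^ k).trace = ∑ i, s i ^ (2 * k) := by
    rw [hMk k hk, Matrix.trace_mul_cycle, hU, Matrix.one_mul, hD, Matrix.diagonal_pow,
      Matrix.trace_diagonal]
    refine Finset.sum_congr rfl fun i _ => ?_
    simp [Pi.pow_apply, ← pow_mul, mul_comm]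
  rw [htr] at hfinal
  exact hfinal


set_option maxHeartbeats 1000000 in
/-- Let `μ_s` be the law on `Mat(ℕ × m, ℝ)` of `G ⬝ diag(s) ⬝ O`, where `G` has i.i.d.
standard real Gaussian entries and `O` is an independent Haar-random matrix in `O(m)`
(its law is an invariant probability measure on the orthogonal group). Then for
`μ_s`-almost every `X` and every `k ≥ 1`,
`tr([(1/n) C_n(X)ᵀ C_n(X)]^k) → ∑_{i=1}^m s_i^{2k}` as `n → ∞`. -/
theorem mu_s_ae_trace_limit (m : ℕ) {Ω : Type*} [MeasurableSpace Ω] (P : Measure Ω)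
    [IsProbabilityMeasure P] (g : ℕ → Fin m → Ω → ℝ)
    (hindep : iIndepFun (fun p : ℕ × Fin m => g p.1 p.2) P)
    (hdist : ∀ l j, Measure.map (g l j) P = gaussianReal 0 1)
    (O : Ω → Matrix.orthogonalGroup (Fin m) ℝ)
    (hOindep : IndepFun (fun ω => (fun p : ℕ × Fin m => g p.1 p.2 ω)) O P)
    (hOhaar : ∀ U : Matrix.orthogonalGroup (Fin m) ℝ,
      Measure.map (fun V => U * V) (Measure.map O P) = Measure.map O P)
    (s : Fin m → ℝ) (hs_mono : Antitone s) (hs_nonneg : ∀ i, 0 ≤ s i)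
    (μs : Measure (ℕ → Fin m → ℝ))
    (hμs : μs = Measure.map
      (fun ω => fun (i : ℕ) (j : Fin m) =>
        ∑ l : Fin m, g i l ω * s l * (O ω : Matrix (Fin m) (Fin m) ℝ) l j) P) :
    ∀ᵐ X ∂μs, ∀ k : ℕ, 1 ≤ k →
      Tendsto
        (fun n : ℕ =>
          Matrix.trace
            ((((n : ℝ)⁻¹) •
              ((Matrix.of (fun (l : Fin n) (j : Fin m) => X l j))ᵀ *
                Matrix.of (fun (l : Fin n) (j : Fin m) => X l j))) ^ k))
        atTop (nhds (∑ i, s i ^ (2 * k))) := by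
  classical
  have hucont : ∀ k n : ℕ, Continuous (fun X : ℕ → Fin m → ℝ =>
      Matrix.trace ((((n : ℝ)⁻¹) •
        ((Matrix.of (fun (l : Fin n) (j : Fin m) => X l j))ᵀ *
          Matrix.of (fun (l : Fin n) (j : Fin m) => X l j))) ^ k)) := by
    intro k n
    have h1 : Continuous (fun X : ℕ → Fin m → ℝ =>
        (Matrix.of (fun (l : Fin n) (j : Fin m) => X l j) : Matrix (Fin n) (Fin m) ℝ)) :=
      continuous_pi fun l => continuous_pi fun j =>
        (continuous_apply j).comp (continuous_apply ((l : Fin n) : ℕ))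
    have h2 : Continuous (fun X : ℕ → Fin m → ℝ =>
        (((n : ℝ)⁻¹) • ((Matrix.of (fun (l : Fin n) (j : Fin m) => X l j))ᵀ *
          Matrix.of (fun (l : Fin n) (j : Fin m) => X l j)) : Matrix (Fin m) (Fin m) ℝ)) :=
      (h1.matrix_transpose.matrix_mul h1).const_smul ((n : ℝ)⁻¹)
    exact ((continuous_pow k).matrix_trace.comp h2)
  have hmeasset : MeasurableSet {X : ℕ → Fin m → ℝ | ∀ k : ℕ, 1 ≤ k →
      Tendsto
        (fun n : ℕ =>
          Matrix.trace
            ((((n : ℝ)⁻¹) •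
              ((Matrix.of (fun (l : Fin n) (j : Fin m) => X l j))ᵀ *
                Matrix.of (fun (l : Fin n) (j : Fin m) => X l j))) ^ k))
        atTop (nhds (∑ i, s i ^ (2 * k)))} := by
    have : {X : ℕ → Fin m → ℝ | ∀ k : ℕ, 1 ≤ k →
        Tendsto
          (fun n : ℕ =>
            Matrix.trace
              ((((n : ℝ)⁻¹) •
                ((Matrix.of (fun (l : Fin n) (j : Fin m) => X l j))ᵀ *
                  Matrix.of (fun (l : Fin n) (j : Fin m) => X l j))) ^ k))
          atTop (nhds (∑ i, s i ^ (2 * k)))} =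
        ⋂ k : ℕ, {X : ℕ → Fin m → ℝ | 1 ≤ k →
          Tendsto
            (fun n : ℕ =>
              Matrix.trace
                ((((n : ℝ)⁻¹) •
                  ((Matrix.of (fun (l : Fin n) (j : Fin m) => X l j))ᵀ *
                    Matrix.of (fun (l : Fin n) (j : Fin m) => X l j))) ^ k))
            atTop (nhds (∑ i, s i ^ (2 * k)))} := by
      ext X; simp only [Set.mem_setOf_eq, Set.mem_iInter]
    rw [this]
    refine MeasurableSet.iInter fun k => ?_
    by_cases hk : 1 ≤ k
    · simp only [hk, forall_const]
      exact measurableSet_tendsto _ fun n => (hucont k n).measurable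
    · have h0 : {X : ℕ → Fin m → ℝ | 1 ≤ k →
          Tendsto
            (fun n : ℕ =>
              Matrix.trace
                ((((n : ℝ)⁻¹) •
                  ((Matrix.of (fun (l : Fin n) (j : Fin m) => X l j))ᵀ *
                    Matrix.of (fun (l : Fin n) (j : Fin m) => X l j))) ^ k))
            atTop (nhds (∑ i, s i ^ (2 * k)))} = Set.univ := by
        ext X; simp [hk]
      rw [h0]
      exact MeasurableSet.univ
  by_cases hfm : AEMeasurable (fun ω => fun (i : ℕ) (j : Fin m) =>
      ∑ l : Fin m, g i l ω * s l * (O ω : Matrix (Fin m) (Fin m) ℝ) l j) P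
  · rw [hμs]
    refine (ae_map_iff hfm hmeasset).2 ?_
    filter_upwards [slln_cross m g hindep hdist] with ω hω
    have hU : (O ω : Matrix (Fin m) (Fin m) ℝ) * (O ω : Matrix (Fin m) (Fin m) ℝ)ᵀ = 1 := by
      have h2 : (O ω : Matrix (Fin m) (Fin m) ℝ) * star (O ω : Matrix (Fin m) (Fin m) ℝ) = 1 :=
        Unitary.mul_star_self_of_mem (O ω).2
      rwa [Matrix.star_eq_conjTranspose, Matrix.conjTranspose_eq_transpose_of_trivial] at h2
    have hdet := det_trace_limit m s ((O ω : Matrix (Fin m) (Fin m) ℝ)) hU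
      (fun l a => g l a ω) hω
      (fun i j => ∑ l : Fin m, g i l ω * s l * (O ω : Matrix (Fin m) (Fin m) ℝ) l j)
      (fun l j => rfl)
    exact hdet
  · rw [hμs, Measure.map_of_not_aemeasurable hfm]
    simp
end

section
/- Let (s^{(n)}) be a sequence in Δ and suppose the sequence of measures (μ_{s^{(n)}}) on Mat(ℕ×m,ℝ) converges weakly to some probability measure μ. Then sup_n s₁^{(n)} < ∞. -/
open MeasureTheory ProbabilityTheory Filter Finset Matrix

/-- Orthogonality: if `M * Mᵀ = 1` then `∑ⱼ (∑ₗ aₗ M l j)² = ∑ₗ aₗ²`. -/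
lemma aux_orth (m : ℕ) (M : Matrix (Fin m) (Fin m) ℝ) (hM : M * Mᵀ = 1) (a : Fin m → ℝ) :
    ∑ j : Fin m, (∑ l : Fin m, a l * M l j)^2 = ∑ l : Fin m, (a l)^2 := by
  have h1 : ∀ j, (∑ l : Fin m, a l * M l j) = (a ᵥ* M) j := fun j => rfl
  have h2 : ∑ j : Fin m, (∑ l : Fin m, a l * M l j)^2 = (a ᵥ* M) ⬝ᵥ (a ᵥ* M) := by
    simp only [h1, dotProduct, pow_two]
  rw [h2, ← Matrix.mulVec_transpose, Matrix.dotProduct_mulVec, Matrix.vecMul_transpose,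
    Matrix.mulVec_mulVec, hM, Matrix.one_mulVec]
  simp [dotProduct, pow_two]

/-- If `(s^{(n)})` is a sequence in `Δ` such that the measures `μ_{s^{(n)}}` (laws of
`G·diag(s^{(n)})·O` on `Mat(ℕ × m, ℝ)`, with `G` an i.i.d. standard Gaussian matrix and
`O` an independent Haar-random orthogonal matrix) converge weakly to some probability
measure `μ`, then `sup_n s₁^{(n)} < ∞`. -/
theorem tightness_forces_bounded (m : ℕ) (hm : 0 < m) {Ω : Type*} [MeasurableSpace Ω]
    (P : Measure Ω) [IsProbabilityMeasure P] (g : ℕ → Fin m → Ω → ℝ)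
    (hindep : iIndepFun (fun p : ℕ × Fin m => g p.1 p.2) P)
    (hdist : ∀ l j, Measure.map (g l j) P = gaussianReal 0 1)
    (O : Ω → Matrix.orthogonalGroup (Fin m) ℝ)
    (hOindep : IndepFun (fun ω => (fun p : ℕ × Fin m => g p.1 p.2 ω)) O P)
    (hOhaar : ∀ U : Matrix.orthogonalGroup (Fin m) ℝ,
      Measure.map (fun V => U * V) (Measure.map O P) = Measure.map O P)
    (s : ℕ → Fin m → ℝ)
    (hs_mono : ∀ n, Antitone (s n)) (hs_nonneg : ∀ n i, 0 ≤ s n i)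
    (μseq : ℕ → Measure (ℕ → Fin m → ℝ))
    (hμseq : ∀ n, μseq n = Measure.map
      (fun ω => fun (i : ℕ) (j : Fin m) =>
        ∑ l : Fin m, g i l ω * s n l * (O ω : Matrix (Fin m) (Fin m) ℝ) l j) P)
    (μ : Measure (ℕ → Fin m → ℝ)) (hμ : IsProbabilityMeasure μ)
    (hweak : ∀ f : BoundedContinuousFunction (ℕ → Fin m → ℝ) ℝ,
      Tendsto (fun n => ∫ X, f X ∂(μseq n)) atTop (nhds (∫ X, f X ∂μ))) :
    ∃ B : ℝ, ∀ n, s n ⟨0, hm⟩ ≤ B := by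
  haveI := hμ
  -- a.e. measurability of the Gaussian entries
  have hg : ∀ l j, AEMeasurable (g l j) P := by
    intro l j
    by_contra h
    have hd := hdist l j
    rw [Measure.map_of_not_aemeasurable h] at hd
    have h1 : (0 : Measure ℝ) Set.univ = (gaussianReal 0 1) Set.univ := by rw [hd]
    simp at h1
  set i0 : Fin m := ⟨0, hm⟩ with hi0
  -- the test function
  set F : (ℕ → Fin m → ℝ) → ℝ := fun X => Real.exp (-(∑ j : Fin m, (X 0 j)^2)) with hF
  have hFcont : Continuous F := by
    apply Real.continuous_exp.comp
    apply Continuous.neg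
    exact continuous_finset_sum _ fun j _ => ((continuous_apply j).comp (continuous_apply 0)).pow 2
  have hFpos : ∀ X, 0 < F X := fun X => Real.exp_pos _
  have hFle : ∀ X, F X ≤ 1 := fun X =>
    Real.exp_le_one_iff.mpr (neg_nonpos.mpr (Finset.sum_nonneg fun j _ => sq_nonneg _))
  set f : BoundedContinuousFunction (ℕ → Fin m → ℝ) ℝ :=
    BoundedContinuousFunction.ofNormedAddCommGroup F hFcont 1 (fun X => by
      rw [Real.norm_eq_abs, abs_of_pos (hFpos X)]; exact hFle X) with hf
  have hfapp : ∀ X, f X = F X := fun X => rfl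
  -- integrability helper
  have hexpint : ∀ (q : Ω → ℝ), AEStronglyMeasurable q P → (∀ ω, 0 ≤ q ω) →
      Integrable (fun ω => Real.exp (-(q ω))) P := by
    intro q hq hq0
    refine Integrable.mono' (integrable_const 1)
      (Real.continuous_exp.comp_aestronglyMeasurable hq.neg) (ae_of_all _ fun ω => ?_)
    rw [Real.norm_eq_abs, abs_of_pos (Real.exp_pos _)]
    exact Real.exp_le_one_iff.mpr (neg_nonpos.mpr (hq0 ω))
  -- the comparison integral
  set I : ℝ → ℝ := fun c => ∫ ω, Real.exp (-((c * g 0 i0 ω)^2)) ∂P with hIdef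
  have hqmeas : ∀ c : ℝ, AEStronglyMeasurable (fun ω => (c * g 0 i0 ω)^2) P :=
    fun c => ((continuous_pow 2).measurable.comp_aemeasurable ((hg 0 i0).const_mul c)).aestronglyMeasurable
  have hIint : ∀ c : ℝ, Integrable (fun ω => Real.exp (-((c * g 0 i0 ω)^2))) P :=
    fun c => hexpint _ (hqmeas c) (fun ω => sq_nonneg _)
  -- key inequality: ∫ f dμseq n ≤ I (s n i0)
  have key : ∀ n, (∫ X, f X ∂(μseq n)) ≤ I (s n i0) := by
    intro n
    set T : Ω → ℕ → Fin m → ℝ := fun ω => fun i j =>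
      ∑ l : Fin m, g i l ω * s n l * (O ω : Matrix (Fin m) (Fin m) ℝ) l j with hTdef
    have hqmeas2 : AEStronglyMeasurable (fun ω => ∑ l : Fin m, (g 0 l ω * s n l)^2) P := by
      refine (Finset.aemeasurable_fun_sum _ fun l _ => ?_).aestronglyMeasurable
      exact (continuous_pow 2).measurable.comp_aemeasurable ((hg 0 l).mul_const (s n l))
    have hint2 : Integrable (fun ω => Real.exp (-(∑ l : Fin m, (g 0 l ω * s n l)^2))) P :=
      hexpint _ hqmeas2 (fun ω => Finset.sum_nonneg fun l _ => sq_nonneg _)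
    have hstep : (∫ ω, Real.exp (-(∑ l : Fin m, (g 0 l ω * s n l)^2)) ∂P) ≤ I (s n i0) := by
      refine integral_mono hint2 (hIint _) fun ω => ?_
      refine Real.exp_le_exp.mpr (neg_le_neg ?_)
      have h1 : (g 0 i0 ω * s n i0)^2 ≤ ∑ l : Fin m, (g 0 l ω * s n l)^2 :=
        Finset.single_le_sum (f := fun l => (g 0 l ω * s n l)^2)
          (fun l _ => sq_nonneg _) (Finset.mem_univ i0)
      calc (s n i0 * g 0 i0 ω)^2 = (g 0 i0 ω * s n i0)^2 := by ring
        _ ≤ _ := h1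
    by_cases hmeas : AEMeasurable T P
    · have h1 : (∫ X, f X ∂(μseq n)) = ∫ ω, F (T ω) ∂P := by
        rw [hμseq n]
        exact integral_map hmeas f.continuous.aestronglyMeasurable
      have h2 : ∀ ω, F (T ω) = Real.exp (-(∑ l : Fin m, (g 0 l ω * s n l)^2)) := by
        intro ω
        have hMem := (O ω).2
        rw [Matrix.mem_orthogonalGroup_iff] at hMem
        have hM : (O ω : Matrix (Fin m) (Fin m) ℝ) * (O ω : Matrix (Fin m) (Fin m) ℝ)ᵀ = 1 := by
          simpa [Matrix.star_eq_conjTranspose,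
            Matrix.conjTranspose_eq_transpose_of_trivial] using hMem
        simp only [hF, hTdef]
        congr 1
        congr 1
        exact aux_orth m _ hM (fun l => g 0 l ω * s n l)
      rw [h1]
      calc (∫ ω, F (T ω) ∂P)
          = ∫ ω, Real.exp (-(∑ l : Fin m, (g 0 l ω * s n l)^2)) ∂P :=
            integral_congr_ae (ae_of_all _ h2)
        _ ≤ I (s n i0) := hstep
    · rw [hμseq n, Measure.map_of_not_aemeasurable hmeas]
      simp only [integral_zero_measure]
      exact integral_nonneg fun ω => (Real.exp_pos _).le
  -- monotonicity of I
  have Imono : ∀ c d : ℝ, 0 ≤ c → c ≤ d → I d ≤ I c := by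
    intro c d hc hcd
    refine integral_mono (hIint d) (hIint c) fun ω => ?_
    refine Real.exp_le_exp.mpr (neg_le_neg ?_)
    have h1 : c^2 ≤ d^2 := pow_le_pow_left₀ hc hcd 2
    calc (c * g 0 i0 ω)^2 = c^2 * (g 0 i0 ω)^2 := by ring
      _ ≤ d^2 * (g 0 i0 ω)^2 := mul_le_mul_of_nonneg_right h1 (sq_nonneg _)
      _ = (d * g 0 i0 ω)^2 := by ring
  -- the Gaussian entry is a.e. nonzero
  have hnull : P {ω | g 0 i0 ω = 0} = 0 := by
    have h1 := Measure.map_apply_of_aemeasurable (hg 0 i0) (measurableSet_singleton (0 : ℝ))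
    rw [hdist 0 i0] at h1
    have h2 : gaussianReal 0 1 {(0 : ℝ)} = 0 :=
      gaussianReal_absolutelyContinuous 0 one_ne_zero (measure_singleton 0)
    have h3 : g 0 i0 ⁻¹' {(0 : ℝ)} = {ω | g 0 i0 ω = 0} := rfl
    rw [h2] at h1
    rw [← h3]
    exact h1.symm
  have hae : ∀ᵐ ω ∂P, g 0 i0 ω ≠ 0 := by
    rw [ae_iff]
    convert hnull using 2
    simp
  -- I (k) → 0
  have htend : Tendsto (fun k : ℕ => I k) atTop (nhds 0) := by
    have h0 : (0 : ℝ) = ∫ (_ : Ω), (0 : ℝ) ∂P := by simp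
    rw [h0]
    refine tendsto_integral_of_dominated_convergence (fun _ => (1 : ℝ))
      (fun k => (hIint k).1) (integrable_const 1) (fun k => ae_of_all _ fun ω => ?_) ?_
    · rw [Real.norm_eq_abs, abs_of_pos (Real.exp_pos _)]
      exact Real.exp_le_one_iff.mpr (neg_nonpos.mpr (sq_nonneg _))
    · filter_upwards [hae] with ω hω
      have hpos : 0 < (g 0 i0 ω)^2 := sq_pos_of_ne_zero hω
      have htop : Tendsto (fun k : ℕ => ((k : ℝ) * g 0 i0 ω)^2) atTop atTop := by
        have h2 : Tendsto (fun k : ℕ => (g 0 i0 ω)^2 * (k : ℝ)^2) atTop atTop :=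
          (tendsto_pow_atTop (two_ne_zero)).comp tendsto_natCast_atTop_atTop
            |>.const_mul_atTop hpos
        refine h2.congr fun k => by ring
      have := Real.tendsto_exp_neg_atTop_nhds_zero.comp htop
      exact this
  -- positivity of the limit integral
  have hL : 0 < ∫ X, f X ∂μ := by
    have hint : Integrable F μ := f.integrable μ
    rw [show (∫ X, f X ∂μ) = ∫ X, F X ∂μ from rfl,
      integral_pos_iff_support_of_nonneg_ae (ae_of_all _ fun X => (hFpos X).le) hint]
    have hsupp : Function.support F = Set.univ :=
      Set.eq_univ_of_forall fun X => (hFpos X).ne'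
    rw [hsupp]
    simp
  -- assemble
  set L := ∫ X, f X ∂μ with hLdef
  obtain ⟨N, hN⟩ := (eventually_atTop.mp ((hweak f).eventually
    (eventually_gt_nhds (show L / 2 < L by linarith))))
  obtain ⟨K, hK⟩ := (htend.eventually (eventually_lt_nhds (show (0:ℝ) < L / 2 by linarith))).exists
  refine ⟨(K : ℝ) + ∑ l ∈ Finset.range N, |s l i0|, fun n => ?_⟩
  have hsum0 : (0 : ℝ) ≤ ∑ l ∈ Finset.range N, |s l i0| :=
    Finset.sum_nonneg fun _ _ => abs_nonneg _
  by_cases hn : N ≤ n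
  · have h1 : s n i0 ≤ (K : ℝ) := by
      by_contra h
      push_neg at h
      have h2 : I (s n i0) ≤ I K := Imono K _ (Nat.cast_nonneg K) h.le
      have h3 := hN n hn
      have h4 := key n
      linarith
    linarith
  · push_neg at hn
    have h1 : s n i0 ≤ ∑ l ∈ Finset.range N, |s l i0| :=
      (le_abs_self _).trans (Finset.single_le_sum (f := fun l => |s l i0|)
        (fun l _ => abs_nonneg _) (Finset.mem_range.mpr hn))
    have h2 : (0 : ℝ) ≤ K := Nat.cast_nonneg K
    linarith
end
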